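/- For every natural number n ≥ 0, with T_1 = {12, 12̄, 1̄2}, one has b_n(T_1) = Σ_{d=0}^{n} Σ ∏_{j=0}^{d} i_j!, where the inner sum runs over all (d+1)-tuples (i_0, i_1, …, i_d) of nonnegative integers with i_0 + i_1 + … + i_d = n − d. -/

import Mathlib

/-- A signed permutation of length `n`: a permutation of `Fin n` (the absolute
values) together with a sign (bar) for each position. -/
abbrev SignedPerm (n : ℕ) := Equiv.Perm (Fin n) × (Fin n → Bool)

/-- `α` contains the signed pattern `τ`. -/
def SPContains {n k : ℕ} (α : SignedPerm n) (τ : SignedPerm k) : Prop :=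
  ∃ f : Fin k → Fin n, StrictMono f ∧
    (∀ p q : Fin k, τ.1 p < τ.1 q ↔ α.1 (f p) < α.1 (f q)) ∧
    ∀ j : Fin k, α.2 (f j) = τ.2 j

/-- `α` avoids every pattern in `T`. -/
def AvoidsAll {n k : ℕ} (T : Set (SignedPerm k)) (α : SignedPerm n) : Prop :=
  ∀ τ ∈ T, ¬ SPContains α τ

/-- `bn n T` is the number of signed permutations in `B_n` avoiding all patterns of `T`. -/
noncomputable def bn (n : ℕ) (T : Set (SignedPerm 2)) : ℕ :=
  Nat.card {α : SignedPerm n // AvoidsAll T α}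

def p12   : SignedPerm 2 := (Equiv.refl (Fin 2), ![false, false])
def p21   : SignedPerm 2 := (Equiv.swap 0 1,     ![false, false])
def p12b  : SignedPerm 2 := (Equiv.refl (Fin 2), ![false, true])
def p1b2  : SignedPerm 2 := (Equiv.refl (Fin 2), ![true, false])
def p21b  : SignedPerm 2 := (Equiv.swap 0 1,     ![false, true])
def p2b1  : SignedPerm 2 := (Equiv.swap 0 1,     ![true, false])
def p1b2b : SignedPerm 2 := (Equiv.refl (Fin 2), ![true, true])
def p2b1b : SignedPerm 2 := (Equiv.swap 0 1,     ![true, true])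

def Pc {n : ℕ} (α : SignedPerm n) : Prop :=
  ∀ i j : Fin n, i < j → α.1 i < α.1 j → α.2 i = true ∧ α.2 j = true

lemma contains_iff {n : ℕ} (α : SignedPerm n) (b0 b1 : Bool) :
    SPContains α (Equiv.refl (Fin 2), ![b0, b1]) ↔
      ∃ i j : Fin n, i < j ∧ α.1 i < α.1 j ∧ α.2 i = b0 ∧ α.2 j = b1 := by
  constructor
  · rintro ⟨f, hmono, hord, hsign⟩
    refine ⟨f 0, f 1, hmono (by norm_num), ?_, ?_, ?_⟩
    · exact (hord 0 1).mp (by norm_num)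
    · simpa using hsign 0
    · simpa using hsign 1
  · rintro ⟨i, j, hij, hv, h0, h1⟩
    refine ⟨![i, j], ?_, ?_, ?_⟩
    · intro p q hpq
      rw [Fin.lt_def] at hpq
      revert p q
      simp only [Fin.forall_fin_two]
      simp [hij]
    · intro p q
      revert p q
      simp only [Fin.forall_fin_two]
      refine ⟨⟨by simp, ?_⟩, ⟨?_, by simp⟩⟩
      · simp [Fin.lt_def, hv]
      · simp only [Matrix.cons_val_one, Matrix.head_cons, Matrix.cons_val_zero]
        constructor
        · intro h; exact absurd h (by simp [Fin.lt_def])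
        · intro h; exact absurd h (asymm hv)
    · intro p
      revert p
      simp only [Fin.forall_fin_two]
      exact ⟨by simpa using h0, by simpa using h1⟩

lemma avoid_iff {n : ℕ} (α : SignedPerm n) :
    AvoidsAll {p12, p12b, p1b2} α ↔ Pc α := by
  constructor
  · intro h i j hij hv
    have h12 := h p12 (by simp)
    have h12b := h p12b (by simp)
    have h1b2 := h p1b2 (by simp)
    rw [p12, contains_iff] at h12
    rw [p12b, contains_iff] at h12b
    rw [p1b2, contains_iff] at h1b2
    push_neg at h12 h12b h1b2
    rcases hb0 : α.2 i <;> rcases hb1 : α.2 j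
    · exact absurd hb1 (h12 i j hij hv hb0)
    · exact absurd hb1 (h12b i j hij hv hb0)
    · exact absurd hb1 (h1b2 i j hij hv hb0)
    · exact ⟨rfl, rfl⟩
  · intro hP τ hτ hc
    have hτ' : τ = p12 ∨ τ = p12b ∨ τ = p1b2 := by simpa using hτ
    rcases hτ' with rfl | rfl | rfl <;>
      [rw [p12, contains_iff] at hc; rw [p12b, contains_iff] at hc;
       rw [p1b2, contains_iff] at hc] <;>
    · obtain ⟨i, j, hij, hv, h0, h1⟩ := hc
      have := hP i j hij hv
      simp_all


noncomputable def aP (n : ℕ) : ℕ := Nat.card {α : SignedPerm n // Pc α}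

section Surgery

variable {n : ℕ}

def glueFun (k : Fin (n + 1)) (h : Equiv.Perm (Fin k.val))
    (t : Equiv.Perm (Fin (n - k.val))) : Fin (n + 1) → Fin (n + 1) := fun i =>
  if hi : i.val < k.val then
    ⟨n - k.val + 1 + (h ⟨i.val, hi⟩).val,
      by have := (h ⟨i.val, hi⟩).isLt; have := k.isLt; omega⟩
  else if hi2 : i.val = k.val then ⟨n - k.val, by omega⟩
  else ⟨(t ⟨i.val - k.val - 1, by have := i.isLt; omega⟩).val,
      by have := (t ⟨i.val - k.val - 1, by have := i.isLt; omega⟩).isLt; omega⟩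

lemma glueFun_head (k : Fin (n + 1)) (h : Equiv.Perm (Fin k.val))
    (t : Equiv.Perm (Fin (n - k.val))) (i : Fin (n + 1)) (hi : i.val < k.val) :
    (glueFun k h t i).val = n - k.val + 1 + (h ⟨i.val, hi⟩).val := by
  unfold glueFun; rw [dif_pos hi]

lemma glueFun_mid (k : Fin (n + 1)) (h : Equiv.Perm (Fin k.val))
    (t : Equiv.Perm (Fin (n - k.val))) (i : Fin (n + 1)) (hi : i.val = k.val) :
    (glueFun k h t i).val = n - k.val := by
  unfold glueFun; rw [dif_neg (by omega : ¬ i.val < k.val), dif_pos hi]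

lemma glueFun_tail (k : Fin (n + 1)) (h : Equiv.Perm (Fin k.val))
    (t : Equiv.Perm (Fin (n - k.val))) (i : Fin (n + 1)) (hi : k.val < i.val) :
    (glueFun k h t i).val = (t ⟨i.val - k.val - 1, by have := i.isLt; omega⟩).val := by
  unfold glueFun
  rw [dif_neg (by omega : ¬ i.val < k.val), dif_neg (by omega : ¬ i.val = k.val)]

lemma glueFun_head_ge (k : Fin (n + 1)) (h : Equiv.Perm (Fin k.val))
    (t : Equiv.Perm (Fin (n - k.val))) (i : Fin (n + 1)) (hi : i.val < k.val) :
    n - k.val + 1 ≤ (glueFun k h t i).val := by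
  rw [glueFun_head k h t i hi]; omega

lemma glueFun_head_le (k : Fin (n + 1)) (h : Equiv.Perm (Fin k.val))
    (t : Equiv.Perm (Fin (n - k.val))) (i : Fin (n + 1)) (hi : i.val < k.val) :
    (glueFun k h t i).val ≤ n := by
  rw [glueFun_head k h t i hi]
  have := (h ⟨i.val, hi⟩).isLt; have := k.isLt; omega

lemma glueFun_tail_lt (k : Fin (n + 1)) (h : Equiv.Perm (Fin k.val))
    (t : Equiv.Perm (Fin (n - k.val))) (i : Fin (n + 1)) (hi : k.val < i.val) :
    (glueFun k h t i).val < n - k.val := by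
  rw [glueFun_tail k h t i hi]
  exact (t _).isLt

lemma glueFun_inj (k : Fin (n + 1)) (h : Equiv.Perm (Fin k.val))
    (t : Equiv.Perm (Fin (n - k.val))) : Function.Injective (glueFun k h t) := by
  intro i j hij
  have hval := congrArg Fin.val hij
  apply Fin.ext
  rcases lt_trichotomy i.val k.val with hi | hi | hi <;>
    rcases lt_trichotomy j.val k.val with hj | hj | hj
  · rw [glueFun_head k h t i hi, glueFun_head k h t j hj] at hval
    have := h.injective (a₁ := ⟨i.val, hi⟩) (a₂ := ⟨j.val, hj⟩) (Fin.ext (by omega))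
    simpa [Fin.mk.injEq] using congrArg Fin.val this
  · have := glueFun_head_ge k h t i hi; have := glueFun_mid k h t j hj; omega
  · have := glueFun_head_ge k h t i hi; have := glueFun_tail_lt k h t j hj; omega
  · have := glueFun_head_ge k h t j hj; have := glueFun_mid k h t i hi; omega
  · omega
  · have := glueFun_mid k h t i hi; have := glueFun_tail_lt k h t j hj; omega
  · have := glueFun_head_ge k h t j hj; have := glueFun_tail_lt k h t i hi; omega
  · have := glueFun_mid k h t j hj; have := glueFun_tail_lt k h t i hi; omega
  · rw [glueFun_tail k h t i hi, glueFun_tail k h t j hj] at hval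
    have := t.injective (a₁ := ⟨i.val - k.val - 1, by have := i.isLt; omega⟩)
      (a₂ := ⟨j.val - k.val - 1, by have := j.isLt; omega⟩) (Fin.ext hval)
    have := congrArg Fin.val this
    simp only at this
    omega

noncomputable def gluePerm (k : Fin (n + 1)) (h : Equiv.Perm (Fin k.val))
    (t : Equiv.Perm (Fin (n - k.val))) : Equiv.Perm (Fin (n + 1)) :=
  Equiv.ofBijective _ ((Finite.injective_iff_bijective).mp (glueFun_inj k h t))

lemma gluePerm_apply (k : Fin (n + 1)) (h : Equiv.Perm (Fin k.val))
    (t : Equiv.Perm (Fin (n - k.val))) (i : Fin (n + 1)) :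
    gluePerm k h t i = glueFun k h t i := rfl

def glueSign (k : Fin (n + 1)) (s : Fin (n - k.val) → Bool) : Fin (n + 1) → Bool := fun i =>
  if hlt : i.val < k.val then true
  else if hi2 : i.val = k.val then false
  else s ⟨i.val - k.val - 1, by have := i.isLt; omega⟩

lemma glueSign_head (k : Fin (n + 1)) (s : Fin (n - k.val) → Bool) (i : Fin (n + 1))
    (hi : i.val < k.val) : glueSign k s i = true := by
  unfold glueSign; rw [dif_pos hi]

lemma glueSign_mid (k : Fin (n + 1)) (s : Fin (n - k.val) → Bool) (i : Fin (n + 1))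
    (hi : i.val = k.val) : glueSign k s i = false := by
  unfold glueSign; rw [dif_neg (by omega : ¬ i.val < k.val), dif_pos hi]

lemma glueSign_tail (k : Fin (n + 1)) (s : Fin (n - k.val) → Bool) (i : Fin (n + 1))
    (hi : k.val < i.val) :
    glueSign k s i = s ⟨i.val - k.val - 1, by have := i.isLt; omega⟩ := by
  unfold glueSign
  rw [dif_neg (by omega : ¬ i.val < k.val), dif_neg (by omega : ¬ i.val = k.val)]

lemma glue_Pc (k : Fin (n + 1)) (h : Equiv.Perm (Fin k.val))
    (β : SignedPerm (n - k.val)) (hβ : Pc β) :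
    Pc (gluePerm k h β.1, glueSign k β.2) := by
  rintro i j hij hv
  rw [gluePerm_apply, gluePerm_apply, Fin.lt_def] at hv
  rcases lt_trichotomy j.val k.val with hj | hj | hj
  · have hi : i.val < k.val := lt_trans hij hj
    exact ⟨glueSign_head k β.2 i hi, glueSign_head k β.2 j hj⟩
  · have hi : i.val < k.val := by have := hij; omega
    have := glueFun_head_ge k h β.1 i hi
    have := glueFun_mid k h β.1 j hj
    omega
  · rcases lt_trichotomy i.val k.val with hi | hi | hi
    · have := glueFun_head_ge k h β.1 i hi
      have := glueFun_tail_lt k h β.1 j hj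
      omega
    · have := glueFun_mid k h β.1 i hi
      have := glueFun_tail_lt k h β.1 j hj
      omega
    · rw [glueFun_tail k h β.1 i hi, glueFun_tail k h β.1 j hj] at hv
      have hres := hβ ⟨i.val - k.val - 1, by have := i.isLt; omega⟩
        ⟨j.val - k.val - 1, by have := j.isLt; omega⟩
        (by rw [Fin.lt_def]; simp only; have := hij; omega)
        (by rw [Fin.lt_def]; exact hv)
      exact ⟨by rw [show (gluePerm k h β.1, glueSign k β.2).2 i = glueSign k β.2 i from rfl,
                glueSign_tail k β.2 i hi]; exact hres.1,
             by rw [show (gluePerm k h β.1, glueSign k β.2).2 j = glueSign k β.2 j from rfl,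
                glueSign_tail k β.2 j hj]; exact hres.2⟩

end Surgery

noncomputable def Fmap (n : ℕ) :
    (Equiv.Perm (Fin (n + 1)) ⊕
      Σ k : Fin (n + 1), Equiv.Perm (Fin k.val) × {β : SignedPerm (n - k.val) // Pc β}) →
      {α : SignedPerm (n + 1) // Pc α}
  | Sum.inl σ => ⟨(σ, fun _ => true), fun _ _ _ _ => ⟨rfl, rfl⟩⟩
  | Sum.inr ⟨k, h, β⟩ => ⟨(gluePerm k h β.1.1, glueSign k β.1.2), glue_Pc k h β.1 β.2⟩

lemma Fmap_inj (n : ℕ) : Function.Injective (Fmap n) := by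
  rintro (σ | ⟨k, h, β⟩) (σ' | ⟨k', h', β'⟩) hxy
  · have hp : σ = σ' := congrArg (fun t => t.1.1) hxy
    rw [hp]
  · exfalso
    have hs : (fun _ : Fin (n+1) => true) = glueSign k' β'.1.2 :=
      congrArg (fun t => t.1.2) hxy
    have := congrFun hs k'
    rw [glueSign_mid k' β'.1.2 k' rfl] at this
    exact Bool.noConfusion this
  · exfalso
    have hs : glueSign k β.1.2 = (fun _ : Fin (n+1) => true) :=
      congrArg (fun t => t.1.2) hxy
    have := congrFun hs k
    rw [glueSign_mid k β.1.2 k rfl] at this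
    exact Bool.noConfusion this
  · have hp : gluePerm k h β.1.1 = gluePerm k' h' β'.1.1 := congrArg (fun t => t.1.1) hxy
    have hs : glueSign k β.1.2 = glueSign k' β'.1.2 := congrArg (fun t => t.1.2) hxy
    have hkk : k = k' := by
      by_contra hne
      rcases lt_or_gt_of_ne hne with hlt | hlt
      · have := congrFun hs k
        rw [glueSign_mid k β.1.2 k rfl, glueSign_head k' β'.1.2 k hlt] at this
        exact Bool.noConfusion this
      · have := congrFun hs k'
        rw [glueSign_mid k' β'.1.2 k' rfl, glueSign_head k β.1.2 k' hlt] at this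
        exact Bool.noConfusion this
    subst hkk
    have hvk : (k : ℕ) ≤ n := by have := k.isLt; omega
    have hh : h = h' := by
      apply Equiv.ext
      intro i
      have hik : (i : ℕ) < (k : ℕ) := i.isLt
      set pi : Fin (n + 1) := ⟨i.val, by omega⟩ with hpi
      have hv := congrArg Fin.val (congrFun (congrArg (fun (e : Equiv.Perm (Fin (n+1))) =>
        (e : Fin (n+1) → Fin (n+1))) hp) pi)
      rw [gluePerm_apply, gluePerm_apply, glueFun_head k h β.1.1 pi hik,
        glueFun_head k h' β'.1.1 pi hik] at hv
      have hfix : (⟨pi.val, hik⟩ : Fin k.val) = i := Fin.ext rfl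
      rw [hfix] at hv
      exact Fin.ext (by omega)
    have hβ : β = β' := by
      apply Subtype.ext
      have hβ1 : β.1.1 = β'.1.1 := by
        apply Equiv.ext
        intro j
        have hj : (j : ℕ) < n - (k : ℕ) := j.isLt
        set pj : Fin (n + 1) := ⟨k.val + 1 + j.val, by omega⟩ with hpj
        have hjk : (k : ℕ) < (pj : ℕ) := by simp [hpj]; omega
        have hv := congrArg Fin.val (congrFun (congrArg (fun (e : Equiv.Perm (Fin (n+1))) =>
          (e : Fin (n+1) → Fin (n+1))) hp) pj)
        rw [gluePerm_apply, gluePerm_apply, glueFun_tail k h β.1.1 pj hjk,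
          glueFun_tail k h' β'.1.1 pj hjk] at hv
        have hfix : (⟨pj.val - k.val - 1, by have := pj.isLt; omega⟩ : Fin (n - k.val)) = j :=
          Fin.ext (by simp [hpj]; omega)
        rw [hfix] at hv
        exact Fin.ext hv
      have hβ2 : β.1.2 = β'.1.2 := by
        funext j
        have hj : (j : ℕ) < n - (k : ℕ) := j.isLt
        set pj : Fin (n + 1) := ⟨k.val + 1 + j.val, by omega⟩ with hpj
        have hjk : (k : ℕ) < (pj : ℕ) := by simp [hpj]; omega
        have hv := congrFun hs pj
        rw [glueSign_tail k β.1.2 pj hjk, glueSign_tail k β'.1.2 pj hjk] at hv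
        have hfix : (⟨pj.val - k.val - 1, by have := pj.isLt; omega⟩ : Fin (n - k.val)) = j :=
          Fin.ext (by simp [hpj]; omega)
        rw [hfix] at hv
        exact hv
      exact Prod.ext hβ1 hβ2
    rw [hh, hβ]
section Extract

variable {n : ℕ} (σ : Equiv.Perm (Fin (n + 1))) (k : Fin (n + 1))

def headFun (hd : ∀ j : Fin (n + 1), (j : ℕ) < (k : ℕ) → n - (k : ℕ) + 1 ≤ (σ j : ℕ)) :
    Fin k.val → Fin k.val := fun i =>
  ⟨(σ ⟨i.val, Nat.lt_trans i.isLt k.isLt⟩).val - (n - k.val + 1), by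
    have h1 := hd ⟨i.val, Nat.lt_trans i.isLt k.isLt⟩ i.isLt
    have h2 := (σ ⟨i.val, Nat.lt_trans i.isLt k.isLt⟩).isLt
    have h3 := i.isLt
    omega⟩

lemma headFun_val (hd : ∀ j : Fin (n + 1), (j : ℕ) < (k : ℕ) → n - (k : ℕ) + 1 ≤ (σ j : ℕ))
    (i : Fin k.val) :
    (headFun σ k hd i : ℕ) = (σ ⟨i.val, Nat.lt_trans i.isLt k.isLt⟩ : ℕ) - (n - k.val + 1) :=
  rfl

lemma headFun_inj (hd : ∀ j : Fin (n + 1), (j : ℕ) < (k : ℕ) → n - (k : ℕ) + 1 ≤ (σ j : ℕ)) :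
    Function.Injective (headFun σ k hd) := by
  intro a b hab
  have hval := congrArg Fin.val hab
  rw [headFun_val, headFun_val] at hval
  have h1 := hd ⟨a.val, Nat.lt_trans a.isLt k.isLt⟩ a.isLt
  have h2 := hd ⟨b.val, Nat.lt_trans b.isLt k.isLt⟩ b.isLt
  have heq : σ ⟨a.val, Nat.lt_trans a.isLt k.isLt⟩ = σ ⟨b.val, Nat.lt_trans b.isLt k.isLt⟩ :=
    Fin.ext (by omega)
  have h3 := congrArg Fin.val (σ.injective heq)
  simp only at h3
  exact Fin.ext h3

noncomputable def headPerm (hd : ∀ j : Fin (n + 1), (j : ℕ) < (k : ℕ) →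
    n - (k : ℕ) + 1 ≤ (σ j : ℕ)) : Equiv.Perm (Fin k.val) :=
  Equiv.ofBijective _ (Finite.injective_iff_bijective.mp (headFun_inj σ k hd))

lemma headPerm_apply (hd : ∀ j : Fin (n + 1), (j : ℕ) < (k : ℕ) → n - (k : ℕ) + 1 ≤ (σ j : ℕ))
    (i : Fin k.val) : headPerm σ k hd i = headFun σ k hd i := rfl

def tailFun (ht : ∀ j : Fin (n + 1), (k : ℕ) < (j : ℕ) → (σ j : ℕ) < n - (k : ℕ)) :
    Fin (n - k.val) → Fin (n - k.val) := fun j =>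
  ⟨(σ ⟨k.val + 1 + j.val, by have := j.isLt; omega⟩).val,
    ht ⟨k.val + 1 + j.val, by have := j.isLt; omega⟩ (by simp only []; omega)⟩

lemma tailFun_val (ht : ∀ j : Fin (n + 1), (k : ℕ) < (j : ℕ) → (σ j : ℕ) < n - (k : ℕ))
    (j : Fin (n - k.val)) :
    (tailFun σ k ht j : ℕ) = (σ ⟨k.val + 1 + j.val, by have := j.isLt; omega⟩ : ℕ) := rfl

lemma tailFun_inj (ht : ∀ j : Fin (n + 1), (k : ℕ) < (j : ℕ) → (σ j : ℕ) < n - (k : ℕ)) :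
    Function.Injective (tailFun σ k ht) := by
  intro a b hab
  have hval := congrArg Fin.val hab
  rw [tailFun_val, tailFun_val] at hval
  have heq : σ ⟨k.val + 1 + a.val, by have := a.isLt; omega⟩ =
      σ ⟨k.val + 1 + b.val, by have := b.isLt; omega⟩ := Fin.ext hval
  have h3 := congrArg Fin.val (σ.injective heq)
  simp only at h3
  exact Fin.ext (by omega)

noncomputable def tailPerm (ht : ∀ j : Fin (n + 1), (k : ℕ) < (j : ℕ) →
    (σ j : ℕ) < n - (k : ℕ)) : Equiv.Perm (Fin (n - k.val)) :=
  Equiv.ofBijective _ (Finite.injective_iff_bijective.mp (tailFun_inj σ k ht))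

lemma tailPerm_apply (ht : ∀ j : Fin (n + 1), (k : ℕ) < (j : ℕ) → (σ j : ℕ) < n - (k : ℕ))
    (j : Fin (n - k.val)) : tailPerm σ k ht j = tailFun σ k ht j := rfl

def tailSign (s : Fin (n + 1) → Bool) : Fin (n - k.val) → Bool := fun j =>
  s ⟨k.val + 1 + j.val, by have := j.isLt; omega⟩

end Extract

lemma Fmap_surj (n : ℕ) : Function.Surjective (Fmap n) := by
  rintro ⟨⟨σ, s⟩, hA⟩
  by_cases hall : ∀ i, s i = true
  · refine ⟨Sum.inl σ, ?_⟩
    apply Subtype.ext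
    simp only [Fmap]
    exact Prod.ext rfl (funext fun i => (hall i).symm)
  · push_neg at hall
    have hne : (Finset.univ.filter (fun i => s i = false)).Nonempty := by
      obtain ⟨i, hi⟩ := hall
      exact ⟨i, by simp [Finset.mem_filter, Bool.not_eq_true] at hi ⊢; exact hi⟩
    set k : Fin (n + 1) := (Finset.univ.filter (fun i => s i = false)).min' hne with hk
    have hkn : (k : ℕ) ≤ n := by have := k.isLt; omega
    have hks : s k = false := by
      have := Finset.min'_mem (Finset.univ.filter (fun i => s i = false)) hne
      rw [← hk] at this
      simpa using this
    have hhead : ∀ j : Fin (n + 1), (j : ℕ) < (k : ℕ) → s j = true := by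
      intro j hj
      by_contra hjs
      have hjf : s j = false := by
        rcases hjj : s j with _ | _
        · rfl
        · exact absurd hjj hjs
      have hle : k ≤ j := by
        rw [hk]
        exact Finset.min'_le _ j (by simp [hjf])
      have := Fin.le_def.mp hle
      omega
    have hF2 : ∀ j : Fin (n + 1), (j : ℕ) < (k : ℕ) → (σ k : ℕ) < (σ j : ℕ) := by
      intro j hj
      by_contra hc
      push_neg at hc
      have hne2 : σ j ≠ σ k := fun e => by
        have := σ.injective e
        rw [this] at hj
        omega
      have hlt : σ j < σ k := by
        rw [Fin.lt_def]
        have := Fin.val_ne_of_ne hne2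
        omega
      have := (hA j k (Fin.lt_def.mpr hj) hlt).2
      change s k = true at this
      rw [hks] at this
      exact Bool.noConfusion this
    have hF3 : ∀ j : Fin (n + 1), (k : ℕ) < (j : ℕ) → (σ j : ℕ) < (σ k : ℕ) := by
      intro j hj
      by_contra hc
      push_neg at hc
      have hne2 : σ k ≠ σ j := fun e => by
        have := σ.injective e
        rw [this] at hj
        omega
      have hlt : σ k < σ j := by
        rw [Fin.lt_def]
        have := Fin.val_ne_of_ne hne2
        omega
      have := (hA k j (Fin.lt_def.mpr hj) hlt).1
      change s k = true at this
      rw [hks] at this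
      exact Bool.noConfusion this
    have hF4 : (σ k : ℕ) = n - (k : ℕ) := by
      have h1 : ((Finset.Iio k).image σ) ⊆ Finset.Ioi (σ k) := by
        intro v hv
        rw [Finset.mem_image] at hv
        obtain ⟨j, hj, rfl⟩ := hv
        rw [Finset.mem_Iio] at hj
        rw [Finset.mem_Ioi]
        exact Fin.lt_def.mpr (hF2 j (Fin.lt_def.mp hj))
      have h2 : ((Finset.Ioi k).image σ) ⊆ Finset.Iio (σ k) := by
        intro v hv
        rw [Finset.mem_image] at hv
        obtain ⟨j, hj, rfl⟩ := hv
        rw [Finset.mem_Ioi] at hj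
        rw [Finset.mem_Iio]
        exact Fin.lt_def.mpr (hF3 j (Fin.lt_def.mp hj))
      have c1 := Finset.card_le_card h1
      have c2 := Finset.card_le_card h2
      rw [Finset.card_image_of_injective _ σ.injective, Fin.card_Iio, Fin.card_Ioi] at c1
      rw [Finset.card_image_of_injective _ σ.injective, Fin.card_Ioi, Fin.card_Iio] at c2
      have := (σ k).isLt
      omega
    have hheadv : ∀ j : Fin (n + 1), (j : ℕ) < (k : ℕ) → n - (k : ℕ) + 1 ≤ (σ j : ℕ) := by
      intro j hj
      have := hF2 j hj
      omega
    have htailv : ∀ j : Fin (n + 1), (k : ℕ) < (j : ℕ) → (σ j : ℕ) < n - (k : ℕ) := by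
      intro j hj
      have := hF3 j hj
      omega
    have hPct : Pc ((tailPerm σ k htailv, tailSign k s) : SignedPerm (n - k.val)) := by
      intro p q hpq hv
      rw [tailPerm_apply, tailPerm_apply, Fin.lt_def, tailFun_val, tailFun_val] at hv
      have hres := hA ⟨k.val + 1 + p.val, by have := p.isLt; omega⟩
        ⟨k.val + 1 + q.val, by have := q.isLt; omega⟩
        (Fin.lt_def.mpr (by simp only; have := Fin.lt_def.mp hpq; omega))
        (Fin.lt_def.mpr hv)
      exact hres
    refine ⟨Sum.inr ⟨k, headPerm σ k hheadv, ⟨(tailPerm σ k htailv, tailSign k s), hPct⟩⟩, ?_⟩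
    apply Subtype.ext
    simp only [Fmap]
    apply Prod.ext
    · show gluePerm k (headPerm σ k hheadv) (tailPerm σ k htailv) = σ
      apply Equiv.ext
      intro i
      apply Fin.ext
      rw [gluePerm_apply]
      rcases lt_trichotomy (i : ℕ) (k : ℕ) with hi | hi | hi
      · rw [glueFun_head k _ _ i hi, headPerm_apply, headFun_val]
        have h1 := hheadv ⟨(⟨i.val, hi⟩ : Fin k.val).val, Nat.lt_trans (⟨i.val, hi⟩ : Fin k.val).isLt k.isLt⟩
          (⟨i.val, hi⟩ : Fin k.val).isLt
        have hfix : (⟨(⟨i.val, hi⟩ : Fin k.val).val,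
            Nat.lt_trans (⟨i.val, hi⟩ : Fin k.val).isLt k.isLt⟩ : Fin (n + 1)) = i := Fin.ext rfl
        rw [hfix] at h1 ⊢
        have h2 := (σ i).isLt
        omega
      · rw [glueFun_mid k _ _ i hi]
        have hfix : i = k := Fin.ext hi
        rw [hfix, hF4]
      · rw [glueFun_tail k _ _ i hi, tailPerm_apply, tailFun_val]
        have hfix : (⟨k.val + 1 + (⟨i.val - k.val - 1, by have := i.isLt; omega⟩ : Fin (n - k.val)).val,
            by have := i.isLt; simp only; omega⟩ : Fin (n + 1)) = i := Fin.ext (by simp only; omega)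
        rw [hfix]
    · funext i
      show glueSign k (tailSign k s) i = s i
      rcases lt_trichotomy (i : ℕ) (k : ℕ) with hi | hi | hi
      · rw [glueSign_head k _ i hi]
        exact (hhead i hi).symm
      · rw [glueSign_mid k _ i hi]
        have hfix : i = k := Fin.ext hi
        rw [hfix, hks]
      · rw [glueSign_tail k _ i hi]
        show s _ = s i
        congr 1
        exact Fin.ext (by simp only; have := i.isLt; omega)

lemma nat_card_sigma {ι : Type*} [Fintype ι] (f : ι → Type*) [∀ i, Finite (f i)] :
    Nat.card (Σ i, f i) = ∑ i, Nat.card (f i) := by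
  letI : ∀ i, Fintype (f i) := fun i => Fintype.ofFinite _
  simp [Nat.card_eq_fintype_card]

lemma card_perm_fin (m : ℕ) : Nat.card (Equiv.Perm (Fin m)) = m.factorial := by
  rw [Nat.card_eq_fintype_card, Fintype.card_perm, Fintype.card_fin]

lemma aP_zero : aP 0 = 1 := by
  rw [aP, Nat.card_eq_one_iff_unique]
  constructor
  · constructor
    rintro ⟨⟨σ1, s1⟩, _⟩ ⟨⟨σ2, s2⟩, _⟩
    apply Subtype.ext
    exact Prod.ext (Equiv.ext fun x => x.elim0) (funext fun x => x.elim0)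
  · exact ⟨⟨(Equiv.refl _, fun _ => true), fun i j _ _ => ⟨rfl, rfl⟩⟩⟩

lemma aP_succ (n : ℕ) :
    aP (n + 1) = (n + 1).factorial + ∑ k ∈ Finset.range (n + 1), k.factorial * aP (n - k) := by
  have e : (Equiv.Perm (Fin (n + 1)) ⊕
      Σ k : Fin (n + 1), Equiv.Perm (Fin k.val) × {β : SignedPerm (n - k.val) // Pc β}) ≃
      {α : SignedPerm (n + 1) // Pc α} :=
    Equiv.ofBijective (Fmap n) ⟨Fmap_inj n, Fmap_surj n⟩
  rw [aP, ← Nat.card_congr e, Nat.card_sum, nat_card_sigma]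
  congr 1
  · exact card_perm_fin (n + 1)
  · rw [← Fin.sum_univ_eq_sum_range (fun k => k.factorial * aP (n - k)) (n + 1)]
    apply Finset.sum_congr rfl
    intro k _
    rw [Nat.card_prod, card_perm_fin]
    rfl

def g (n : ℕ) : ℕ :=
  ∑ d ∈ Finset.range (n + 1),
    ∑ f ∈ Finset.Nat.antidiagonalTuple (d + 1) (n - d), ∏ j, Nat.factorial (f j)

lemma g_zero : g 0 = 1 := by decide

lemma sum_triangle_swap (n : ℕ) (F : ℕ → ℕ → ℕ) :
    ∑ e ∈ Finset.range (n + 1), ∑ x ∈ Finset.range (n + 1 - e), F e x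
      = ∑ x ∈ Finset.range (n + 1), ∑ e ∈ Finset.range (n + 1 - x), F e x := by
  rw [Finset.sum_sigma', Finset.sum_sigma']
  refine Finset.sum_nbij' (fun p => ⟨p.2, p.1⟩) (fun p => ⟨p.2, p.1⟩) ?_ ?_ ?_ ?_ ?_ <;>
    simp only [Finset.mem_sigma, Finset.mem_range] <;> (try rintro ⟨a, b⟩ hab) <;>
    simp_all <;> omega

lemma adT_succ_sum (k m : ℕ) (G : ℕ → ℕ) :
    ∑ f ∈ Finset.Nat.antidiagonalTuple (k + 1) m, ∏ j, G (f j)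
      = ∑ p ∈ Finset.HasAntidiagonal.antidiagonal m,
          G p.1 * ∑ t ∈ Finset.Nat.antidiagonalTuple k p.2, ∏ j, G (t j) := by
  have hms : ∀ p ∈ Finset.HasAntidiagonal.antidiagonal m,
      G p.1 * ∑ t ∈ Finset.Nat.antidiagonalTuple k p.2, ∏ j, G (t j)
        = ∑ t ∈ Finset.Nat.antidiagonalTuple k p.2, G p.1 * ∏ j, G (t j) := by
    intro p _
    rw [Finset.mul_sum]
  rw [Finset.sum_congr rfl hms, Finset.sum_sigma']
  refine Finset.sum_nbij' (fun f => ⟨(f 0, ∑ j, Fin.tail f j), Fin.tail f⟩)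
    (fun p => Fin.cons p.1.1 p.2) ?_ ?_ ?_ ?_ ?_
  · intro f hf
    rw [Finset.Nat.mem_antidiagonalTuple] at hf
    rw [Finset.mem_sigma, Finset.HasAntidiagonal.mem_antidiagonal, Finset.Nat.mem_antidiagonalTuple]
    exact ⟨by rw [← hf, Fin.sum_univ_succ]; rfl, rfl⟩
  · rintro ⟨⟨x, y⟩, t⟩ hp
    rw [Finset.mem_sigma, Finset.HasAntidiagonal.mem_antidiagonal, Finset.Nat.mem_antidiagonalTuple] at hp
    rw [Finset.Nat.mem_antidiagonalTuple]
    dsimp only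
    rw [Fin.sum_univ_succ, Fin.cons_zero]
    simp only [Fin.cons_succ]
    rw [hp.2, ← hp.1]
  · intro f _
    dsimp only
    exact Fin.cons_self_tail f
  · rintro ⟨⟨x, y⟩, t⟩ hp
    rw [Finset.mem_sigma, Finset.HasAntidiagonal.mem_antidiagonal, Finset.Nat.mem_antidiagonalTuple] at hp
    dsimp only
    rw [Fin.cons_zero, Fin.tail_cons, hp.2]
  · intro f _
    rw [Fin.prod_univ_succ]
    rfl

lemma g_succ (n : ℕ) :
    g (n + 1) = (n + 1).factorial + ∑ k ∈ Finset.range (n + 1), k.factorial * g (n - k) := by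
  have hL : g (n + 1)
      = (∑ e ∈ Finset.range (n + 1),
          ∑ f ∈ Finset.Nat.antidiagonalTuple (e + 2) (n - e), ∏ j, Nat.factorial (f j))
        + (n + 1).factorial := by
    rw [g, Finset.sum_range_succ']
    congr 1
    · apply Finset.sum_congr rfl
      intro e _
      have h2 : n + 1 - (e + 1) = n - e := by omega
      rw [h2]
    · simp [Finset.Nat.antidiagonalTuple_one]
  rw [hL, Nat.add_comm]
  congr 1
  have hstep : ∀ e ∈ Finset.range (n + 1),
      ∑ f ∈ Finset.Nat.antidiagonalTuple (e + 2) (n - e), ∏ j, Nat.factorial (f j)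
        = ∑ x ∈ Finset.range (n + 1 - e), Nat.factorial x *
            (∑ t ∈ Finset.Nat.antidiagonalTuple (e + 1) (n - e - x), ∏ j, Nat.factorial (t j)) := by
    intro e he
    rw [Finset.mem_range] at he
    rw [adT_succ_sum (e + 1) (n - e),
      Finset.Nat.sum_antidiagonal_eq_sum_range_succ_mk (fun p => Nat.factorial p.1 *
        (∑ t ∈ Finset.Nat.antidiagonalTuple (e + 1) p.2, ∏ j, Nat.factorial (t j))) (n - e)]
    have h3 : (n - e).succ = n + 1 - e := by clear hL; omega
    rw [h3]
  rw [Finset.sum_congr rfl hstep,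
    sum_triangle_swap n (fun e x => Nat.factorial x *
      (∑ t ∈ Finset.Nat.antidiagonalTuple (e + 1) (n - e - x), ∏ j, Nat.factorial (t j)))]
  apply Finset.sum_congr rfl
  intro x hx
  rw [Finset.mem_range] at hx
  rw [g, Finset.mul_sum]
  have h4 : n - x + 1 = n + 1 - x := by clear hL hstep; omega
  rw [h4]
  apply Finset.sum_congr rfl
  intro e he
  have h5 : n - e - x = n - x - e := by clear hL hstep; omega
  rw [h5]

lemma aP_eq_g (n : ℕ) : aP n = g n := by
  induction n using Nat.strong_induction_on with
  | _ n ih =>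
    cases n with
    | zero => rw [aP_zero, g_zero]
    | succ m =>
      rw [aP_succ, g_succ]
      congr 1
      apply Finset.sum_congr rfl
      intro k hk
      rw [Finset.mem_range] at hk
      rw [ih (m - k) (by omega)]

/-- b_n(T₁) with T₁ = {12,12̄,1̄2} equals Σ_{d=0}^n Σ_{i_0+⋯+i_d=n-d} ∏_{j=0}^d i_j!. -/
theorem stmt4 (n : ℕ) :
    bn n {p12, p12b, p1b2} =
      ∑ d ∈ Finset.range (n + 1),
        ∑ f ∈ Finset.Nat.antidiagonalTuple (d + 1) (n - d),
          ∏ j, Nat.factorial (f j) := by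
  have h1 : bn n {p12, p12b, p1b2} = aP n := by
    rw [bn, aP]
    exact Nat.card_congr (Equiv.subtypeEquivRight fun α => avoid_iff α)
  rw [h1, aP_eq_g]
  rfl
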